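/- Let n, m ≥ 1, let ξ̂ ∈ ℝ^{n+1}, let Ω̂ ∈ ℝ^{(n+1)×(n+1)} be positive definite with decomposition Ω̂ = D_{Ω̂} Ω̂̄ D_{Ω̂}, let W ∈ ℝ^{m×n}, and set Ŵ := [W | 0] ∈ ℝ^{m×(n+1)} (i.e., W with an appended zero column). Write ξ ∈ ℝⁿ for the first n entries of ξ̂ and Ω ∈ ℝ^{n×n} for the upper-left n×n block of Ω̂. Then for every ĝ ∈ ℝ^{n+1}, Φ_m(Ŵ ĝ) · φ_{n+1}(ĝ − ξ̂; Ω̂) = Φ_m(W ξ; W Ω Wᵀ + I_m) · sun(ĝ), where sun is the SUN_{n+1,m}(ξ̂, Ω̂, Ω̂̄ D_{Ω̂} Ŵᵀ, W ξ, W Ω Wᵀ + I_m) density. That is, the joint posterior of the latent function values at the n training points and one test point under the affine probit likelihood is a unified skew-normal whose skewness matrix Ω̂̄ D_{Ω̂} Ŵᵀ has last row Ω̂_{n+1,1:n} Wᵀ / √(Ω̂_{n+1,n+1}), and whose parameters γ = W ξ and Γ = W Ω Wᵀ + I_m do not depend on the test point. -/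

import Mathlib

open MeasureTheory Real Matrix

/-- Centered multivariate normal density with covariance `S`. -/
noncomputable def gaussPdf {ι : Type*} [Fintype ι] [DecidableEq ι]
    (S : Matrix ι ι ℝ) (x : ι → ℝ) : ℝ :=
  (2 * π) ^ (-(Fintype.card ι : ℝ) / 2) * S.det ^ (-(1 : ℝ) / 2) *
    Real.exp (-(1 / 2) * (x ⬝ᵥ S⁻¹.mulVec x))

/-- Centered multivariate normal CDF with covariance `S`, evaluated at `a`. -/
noncomputable def gaussCdf {ι : Type*} [Fintype ι] [DecidableEq ι]
    (S : Matrix ι ι ℝ) (a : ι → ℝ) : ℝ :=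
  ∫ t in {t : ι → ℝ | ∀ i, t i ≤ a i}, gaussPdf S t

/-- `D_Ω`: diagonal matrix of square roots of the diagonal of `Ω`. -/
noncomputable def matD {ι : Type*} [Fintype ι] [DecidableEq ι]
    (Ω : Matrix ι ι ℝ) : Matrix ι ι ℝ :=
  Matrix.diagonal fun i => Real.sqrt (Ω i i)

/-- `Ω̄`: the correlation matrix of `Ω`, so that `Ω = D_Ω Ω̄ D_Ω`. -/
noncomputable def matCorr {ι : Type*} [Fintype ι] [DecidableEq ι]
    (Ω : Matrix ι ι ℝ) : Matrix ι ι ℝ :=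
  (matD Ω)⁻¹ * Ω * (matD Ω)⁻¹

/-- Unified skew-normal `SUN(ξ, Ω, Δ, γ, Γ)` density. -/
noncomputable def sunPdf {ι κ : Type*} [Fintype ι] [DecidableEq ι] [Fintype κ] [DecidableEq κ]
    (ξ : ι → ℝ) (Ω : Matrix ι ι ℝ) (Δ : Matrix ι κ ℝ) (γ : κ → ℝ) (Γ : Matrix κ κ ℝ)
    (z : ι → ℝ) : ℝ :=
  gaussPdf Ω (z - ξ) *
    gaussCdf (Γ - Δᵀ * (matCorr Ω)⁻¹ * Δ)
      (γ + (Δᵀ * (matCorr Ω)⁻¹ * (matD Ω)⁻¹).mulVec (z - ξ)) /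
  gaussCdf Γ γ

/-- Standard univariate normal CDF `Φ₁`. -/
noncomputable def stdNormalCdf (a : ℝ) : ℝ :=
  ∫ t in Set.Iic a, (2 * π) ^ (-(1 : ℝ) / 2) * Real.exp (-(t ^ 2) / 2)

/-- `[W | 0]`: append a zero column (in the last position) to `W`. -/
noncomputable def appendZeroCol {m n : ℕ} (W : Matrix (Fin m) (Fin n) ℝ) :
    Matrix (Fin m) (Fin (n + 1)) ℝ :=
  Matrix.of fun k j => Fin.lastCases (0 : ℝ) (fun i => W k i) j


lemma continuous_quadform {m : ℕ} (M : Matrix (Fin m) (Fin m) ℝ) :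
    Continuous fun x : Fin m → ℝ => x ⬝ᵥ M.mulVec x := by
  simp only [dotProduct, Matrix.mulVec]
  fun_prop

lemma exists_quad_lower_bound {m : ℕ} {M : Matrix (Fin m) (Fin m) ℝ} (hM : M.PosDef) :
    ∃ ε > 0, ∀ x : Fin m → ℝ, ε * ∑ i, x i ^ 2 ≤ x ⬝ᵥ M.mulVec x := by
  rcases Nat.eq_zero_or_pos m with hm | hm
  · subst hm
    exact ⟨1, one_pos, fun x => by simp [show x = 0 from funext fun i => i.elim0]⟩
  set K : Set (Fin m → ℝ) := {x | ∑ i, x i ^ 2 = 1} with hK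
  have hsub : K ⊆ Metric.closedBall 0 1 := by
    intro x hx
    rw [Metric.mem_closedBall, dist_zero_right]
    refine (pi_norm_le_iff_of_nonneg zero_le_one).2 fun i => ?_
    rw [Real.norm_eq_abs, ← sq_le_one_iff_abs_le_one]
    calc x i ^ 2 ≤ ∑ j, x j ^ 2 :=
          Finset.single_le_sum (fun j _ => sq_nonneg (x j)) (Finset.mem_univ i)
      _ = 1 := hx
  have hKc : IsCompact K :=
    (isCompact_closedBall 0 1).of_isClosed_subset
      (isClosed_eq (by fun_prop) continuous_const) hsub
  have hKne : K.Nonempty := by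
    refine ⟨Pi.single ⟨0, hm⟩ 1, ?_⟩
    simp [hK, Pi.single_apply, sq, ite_mul, Finset.sum_ite_eq']
  obtain ⟨x₀, hx₀K, hmin⟩ :=
    hKc.exists_isMinOn hKne (continuous_quadform M).continuousOn
  have hx₀ : x₀ ≠ 0 := by
    intro h
    rw [hK] at hx₀K
    simp [h] at hx₀K
  have hε : 0 < x₀ ⬝ᵥ M.mulVec x₀ := by simpa using hM.dotProduct_mulVec_pos hx₀
  refine ⟨x₀ ⬝ᵥ M.mulVec x₀, hε, fun x => ?_⟩
  by_cases hx : x = 0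
  · simp [hx]
  have hs : 0 < ∑ i, x i ^ 2 := by
    obtain ⟨i, hi⟩ := Function.ne_iff.1 hx
    exact Finset.sum_pos' (fun j _ => sq_nonneg _) ⟨i, Finset.mem_univ i, (sq_nonneg _).lt_of_ne (Ne.symm (pow_ne_zero 2 hi))⟩
  set s := ∑ i, x i ^ 2 with hsdef
  have hsq : Real.sqrt s ≠ 0 := by positivity
  set u : Fin m → ℝ := (Real.sqrt s)⁻¹ • x with hu
  have huK : u ∈ K := by
    rw [hK]
    have : ∑ i, u i ^ 2 = (Real.sqrt s)⁻¹ ^ 2 * s := by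
      rw [hsdef, Finset.mul_sum]
      exact Finset.sum_congr rfl fun i _ => by rw [hu]; simp [mul_pow, hsdef]
    simp only [Set.mem_setOf_eq, this]
    rw [inv_pow, Real.sq_sqrt hs.le, inv_mul_cancel₀ hs.ne']
  have hxu : x = Real.sqrt s • u := by
    rw [hu, smul_smul, mul_inv_cancel₀ hsq, one_smul]
  have hquad : x ⬝ᵥ M.mulVec x = s * (u ⬝ᵥ M.mulVec u) := by
    rw [hxu, Matrix.mulVec_smul, smul_dotProduct, dotProduct_smul,
      smul_smul, smul_eq_mul, Real.mul_self_sqrt hs.le]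
  rw [hquad]
  have h2 : x₀ ⬝ᵥ M.mulVec x₀ ≤ u ⬝ᵥ M.mulVec u := hmin huK
  nlinarith [hs, h2]

lemma gaussPdf_pos {ι : Type*} [Fintype ι] [DecidableEq ι]
    {S : Matrix ι ι ℝ} (hS : S.PosDef) (x : ι → ℝ) : 0 < gaussPdf S x :=
  mul_pos (mul_pos (Real.rpow_pos_of_pos (by positivity) _)
    (Real.rpow_pos_of_pos hS.det_pos _)) (Real.exp_pos _)

lemma continuous_gaussPdf {m : ℕ} (S : Matrix (Fin m) (Fin m) ℝ) :
    Continuous (gaussPdf S) := by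
  unfold gaussPdf
  exact continuous_const.mul
    (Real.continuous_exp.comp (continuous_const.mul (continuous_quadform S⁻¹)))

lemma integrable_gaussPdf {m : ℕ} {S : Matrix (Fin m) (Fin m) ℝ} (hS : S.PosDef) :
    Integrable (gaussPdf S) := by
  obtain ⟨ε, hε, hquad⟩ := exists_quad_lower_bound hS.inv
  have hprod : Integrable (fun v : Fin m → ℝ => ∏ i, Real.exp (-(ε/2) * v i ^ 2)) :=
    Integrable.fintype_prod (f := fun (_ : Fin m) (t : ℝ) => Real.exp (-(ε/2) * t ^ 2))
      (fun _ => integrable_exp_neg_mul_sq (by positivity))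
  have hexp : Integrable (fun v : Fin m → ℝ => Real.exp (-(ε/2) * ∑ i, v i ^ 2)) := by
    convert hprod using 2 with v
    rw [Finset.mul_sum, ← Real.exp_sum]
  have hc : (0:ℝ) < (2 * π) ^ (-(Fintype.card (Fin m) : ℝ) / 2) * S.det ^ (-(1 : ℝ) / 2) :=
    mul_pos (Real.rpow_pos_of_pos (by positivity) _) (Real.rpow_pos_of_pos hS.det_pos _)
  refine ((hexp.const_mul
      ((2 * π) ^ (-(Fintype.card (Fin m) : ℝ) / 2) * S.det ^ (-(1 : ℝ) / 2))).mono'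
    (continuous_gaussPdf S).aestronglyMeasurable ?_)
  filter_upwards with v
  rw [Real.norm_eq_abs, abs_of_pos (gaussPdf_pos hS v)]
  unfold gaussPdf
  refine mul_le_mul_of_nonneg_left (Real.exp_le_exp.2 ?_) hc.le
  have h1 := hquad v
  have h2 : (0:ℝ) ≤ ∑ i, v i ^ 2 := Finset.sum_nonneg fun i _ => sq_nonneg _
  nlinarith

lemma gaussCdf_pos {m : ℕ} {S : Matrix (Fin m) (Fin m) ℝ} (hS : S.PosDef) (a : Fin m → ℝ) :
    0 < gaussCdf S a := by
  unfold gaussCdf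
  rw [setIntegral_pos_iff_support_of_nonneg_ae
    (Filter.Eventually.of_forall fun x => (gaussPdf_pos hS x).le)
    (integrable_gaussPdf hS).integrableOn]
  have hsupp : Function.support (gaussPdf S) = Set.univ :=
    Set.eq_univ_of_forall fun x => (gaussPdf_pos hS x).ne'
  rw [hsupp, Set.univ_inter]
  have hset : {t : Fin m → ℝ | ∀ i, t i ≤ a i} = Set.pi Set.univ (fun i => Set.Iic (a i)) := by
    ext t; simp [Set.mem_pi, Pi.le_def]
  rw [hset, volume_pi_pi]
  simp only [Real.volume_Iic, Finset.prod_const, Finset.card_univ, Fintype.card_fin]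
  exact pos_iff_ne_zero.2 (pow_ne_zero _ ENNReal.top_ne_zero)

lemma posDef_sub_castSucc {n : ℕ} {Ωhat : Matrix (Fin (n + 1)) (Fin (n + 1)) ℝ}
    (hΩhat : Ωhat.PosDef) : (Ωhat.submatrix Fin.castSucc Fin.castSucc).PosDef := by
  refine Matrix.PosDef.of_dotProduct_mulVec_pos (hΩhat.isHermitian.submatrix _) fun x hx => ?_
  set y : Fin (n + 1) → ℝ := fun j => Fin.lastCases 0 (fun i => x i) j with hy
  have hyne : y ≠ 0 := by
    obtain ⟨i, hi⟩ := Function.ne_iff.1 hx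
    exact Function.ne_iff.2 ⟨i.castSucc, by simpa [hy] using hi⟩
  have hval : x ⬝ᵥ (Ωhat.submatrix Fin.castSucc Fin.castSucc).mulVec x = y ⬝ᵥ Ωhat.mulVec y := by
    simp only [dotProduct, Matrix.mulVec, Matrix.submatrix_apply, hy]
    rw [Fin.sum_univ_castSucc]
    simp only [Fin.lastCases_castSucc, Fin.lastCases_last, zero_mul, add_zero]
    refine Finset.sum_congr rfl fun i _ => ?_
    congr 1
    rw [Fin.sum_univ_castSucc]
    simp
  have := hΩhat.dotProduct_mulVec_pos hyne
  simpa [hval] using this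


/-- joint posterior of training and test latent values under the affine probit
likelihood with `Ŵ = [W | 0]` is the `SUN_{n+1,m}(ξ̂, Ω̂, Ω̂̄ D_{Ω̂} Ŵᵀ, W ξ, W Ω Wᵀ + I_m)`
density (up to the normalizing constant `Φ_m(W ξ; W Ω Wᵀ + I_m)`); moreover the skewness
matrix `Ω̂̄ D_{Ω̂} Ŵᵀ` has last row `Ω̂_{n+1,1:n} Wᵀ / √(Ω̂_{n+1,n+1})`, and the parameters
`γ = W ξ`, `Γ = W Ω Wᵀ + I_m` do not depend on the test point. -/
theorem joint_posterior_train_test_skewGP (n m : ℕ) (hn : 1 ≤ n) (hm : 1 ≤ m)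
    (ξhat : Fin (n + 1) → ℝ) (Ωhat : Matrix (Fin (n + 1)) (Fin (n + 1)) ℝ)
    (hΩhat : Ωhat.PosDef) (W : Matrix (Fin m) (Fin n) ℝ)
    (ξ : Fin n → ℝ) (hξ : ξ = fun i => ξhat i.castSucc)
    (Ω : Matrix (Fin n) (Fin n) ℝ) (hΩ : Ω = Ωhat.submatrix Fin.castSucc Fin.castSucc) :
    (∀ ghat : Fin (n + 1) → ℝ,
      gaussCdf (1 : Matrix (Fin m) (Fin m) ℝ) ((appendZeroCol W).mulVec ghat) *
          gaussPdf Ωhat (ghat - ξhat) =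
        gaussCdf (W * Ω * Wᵀ + 1) (W.mulVec ξ) *
          sunPdf ξhat Ωhat (matCorr Ωhat * matD Ωhat * (appendZeroCol W)ᵀ)
            (W.mulVec ξ) (W * Ω * Wᵀ + 1) ghat) ∧
    (∀ k : Fin m,
      (matCorr Ωhat * matD Ωhat * (appendZeroCol W)ᵀ) (Fin.last n) k =
        (∑ j : Fin n, Ωhat (Fin.last n) j.castSucc * W k j) /
          Real.sqrt (Ωhat (Fin.last n) (Fin.last n))) := by
  have hdiag : ∀ i, 0 < Ωhat i i := fun i => by
    have h := hΩhat.dotProduct_mulVec_pos (x := Pi.single i 1) (by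
      intro h
      have h1 := congrFun h i
      rw [Pi.single_eq_same] at h1
      exact one_ne_zero h1)
    simpa [dotProduct, Matrix.mulVec, Pi.single_apply, Finset.sum_ite_eq', Finset.sum_ite_eq]
      using h
  set D := matD Ωhat with hD
  have hDdet : IsUnit D.det := by
    rw [hD, matD, Matrix.det_diagonal]
    exact (Finset.prod_pos fun i _ => Real.sqrt_pos.2 (hdiag i)).ne'.isUnit
  have hDD : D * D⁻¹ = 1 := Matrix.mul_nonsing_inv _ hDdet
  have hDD' : D⁻¹ * D = 1 := Matrix.nonsing_inv_mul _ hDdet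
  have hΩdet : IsUnit Ωhat.det := hΩhat.det_pos.ne'.isUnit
  have hΩΩ : Ωhat * Ωhat⁻¹ = 1 := Matrix.mul_nonsing_inv _ hΩdet
  have hΩΩ' : Ωhat⁻¹ * Ωhat = 1 := Matrix.nonsing_inv_mul _ hΩdet
  have hsym : Ωhatᵀ = Ωhat := by
    have := hΩhat.isHermitian
    rwa [Matrix.IsHermitian, Matrix.conjTranspose_eq_transpose_of_trivial] at this
  have hDsym : (D⁻¹)ᵀ = D⁻¹ := by
    rw [Matrix.transpose_nonsing_inv, hD, matD, Matrix.diagonal_transpose]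
  have hCorrInv : (matCorr Ωhat)⁻¹ = D * Ωhat⁻¹ * D := by
    rw [matCorr, ← hD, Matrix.mul_inv_rev, Matrix.mul_inv_rev,
      Matrix.nonsing_inv_nonsing_inv _ hDdet, Matrix.mul_assoc]
  have hDinv : D⁻¹ = Matrix.diagonal (fun i => (Real.sqrt (Ωhat i i))⁻¹) := by
    apply Matrix.inv_eq_left_inv
    rw [hD, matD, Matrix.diagonal_mul_diagonal]
    have h1 : (fun i => (Real.sqrt (Ωhat i i))⁻¹ * Real.sqrt (Ωhat i i)) = fun _ => (1:ℝ) :=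
      funext fun i => inv_mul_cancel₀ (Real.sqrt_pos.2 (hdiag i)).ne'
    rw [h1, Matrix.diagonal_one]
  set Wh := appendZeroCol W with hWh
  have hΔ : matCorr Ωhat * D * Whᵀ = D⁻¹ * Ωhat * Whᵀ := by
    rw [matCorr, ← hD, Matrix.mul_assoc (D⁻¹ * Ωhat), hDD', Matrix.mul_one]
  have hΔT : (D⁻¹ * Ωhat * Whᵀ)ᵀ = Wh * Ωhat * D⁻¹ := by
    rw [Matrix.transpose_mul, Matrix.transpose_mul, Matrix.transpose_transpose, hsym, hDsym,
      Matrix.mul_assoc]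
  have key1 : (Wh * Ωhat * D⁻¹) * (D * Ωhat⁻¹ * D) * D⁻¹ = Wh := by
    calc (Wh * Ωhat * D⁻¹) * (D * Ωhat⁻¹ * D) * D⁻¹
        = Wh * (Ωhat * ((D⁻¹ * D) * (Ωhat⁻¹ * (D * D⁻¹)))) := by
          simp only [Matrix.mul_assoc]
      _ = Wh := by rw [hDD', hDD, Matrix.one_mul, Matrix.mul_one, hΩΩ, Matrix.mul_one]
  have key2 : (Wh * Ωhat * D⁻¹) * (D * Ωhat⁻¹ * D) * (D⁻¹ * Ωhat * Whᵀ)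
      = Wh * Ωhat * Whᵀ := by
    calc (Wh * Ωhat * D⁻¹) * (D * Ωhat⁻¹ * D) * (D⁻¹ * Ωhat * Whᵀ)
        = Wh * (Ωhat * ((D⁻¹ * D) * (Ωhat⁻¹ * ((D * D⁻¹) * (Ωhat * Whᵀ))))) := by
          simp only [Matrix.mul_assoc]
      _ = Wh * Ωhat * Whᵀ := by
          rw [hDD', hDD, Matrix.one_mul, Matrix.one_mul, ← Matrix.mul_assoc Ωhat⁻¹, hΩΩ',
            Matrix.one_mul, Matrix.mul_assoc]
  have hWhΩ : Wh * Ωhat * Whᵀ = W * Ω * Wᵀ := by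
    subst hΩ
    ext k l
    simp only [Matrix.mul_apply, hWh, appendZeroCol, Matrix.transpose_apply, Matrix.of_apply,
      Matrix.submatrix_apply]
    rw [Fin.sum_univ_castSucc]
    simp only [Fin.lastCases_last, Fin.lastCases_castSucc, zero_mul, mul_zero, add_zero]
    refine Finset.sum_congr rfl fun j _ => ?_
    rw [Fin.sum_univ_castSucc]
    simp [Finset.sum_mul, mul_comm, mul_assoc, mul_left_comm]
  have hWhv : Wh.mulVec ξhat = W.mulVec ξ := by
    subst hξ
    ext k
    simp only [Matrix.mulVec, dotProduct, hWh, appendZeroCol, Matrix.of_apply]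
    rw [Fin.sum_univ_castSucc]
    simp
  have hΩpos : Ω.PosDef := hΩ ▸ posDef_sub_castSucc hΩhat
  have hΓpos : (W * Ω * Wᵀ + 1).PosDef := by
    refine Matrix.PosDef.posSemidef_add ?_ Matrix.PosDef.one
    have := hΩpos.posSemidef.mul_mul_conjTranspose_same W
    rwa [Matrix.conjTranspose_eq_transpose_of_trivial] at this
  have hC : 0 < gaussCdf (W * Ω * Wᵀ + 1) (W.mulVec ξ) := gaussCdf_pos hΓpos _
  constructor
  · intro ghat
    rw [sunPdf, hΔ, hΔT, hCorrInv, key1, key2, hWhΩ, add_sub_cancel_left]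
    have harg : W.mulVec ξ + Wh.mulVec (ghat - ξhat) = Wh.mulVec ghat := by
      rw [Matrix.mulVec_sub, hWhv]
      abel
    rw [harg]
    field_simp
  · intro k
    rw [hΔ, Matrix.mul_assoc, div_eq_inv_mul]
    show (D⁻¹ * (Ωhat * Whᵀ)) (Fin.last n) k = _
    rw [hDinv, Matrix.diagonal_mul]
    congr 1
    simp only [Matrix.mul_apply, Matrix.transpose_apply, hWh, appendZeroCol, Matrix.of_apply]
    rw [Fin.sum_univ_castSucc]
    simp
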